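/- Every indecomposable permutation in S_n (n ≥ 2) avoiding both 312 and 321 equals the permutation 2 3 4 ... n 1. -/
import Mathlib


open Finset
open scoped Classical

/-- Number of components of a permutation of `Fin n` (0-based version of
`|{i ∈ [n] : π(j) ≤ i for all j ≤ i}|`). -/
def comps {n : ℕ} (π : Equiv.Perm (Fin n)) : ℕ :=
  (Finset.univ.filter fun i : Fin n => ∀ j, j ≤ i → π j ≤ i).card

/-- Number of descents. -/
def des {n : ℕ} (π : Equiv.Perm (Fin n)) : ℕ :=
  (Finset.univ.filter fun i : Fin n =>
    ∃ h : (i : ℕ) + 1 < n, π ⟨(i : ℕ) + 1, h⟩ < π i).card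

/-- Length of the initial ascending run: `min(DES(π) ∪ {n})` with 1-based descent positions. -/
noncomputable def iar {n : ℕ} (π : Equiv.Perm (Fin n)) : ℕ :=
  sInf {k : ℕ | k = n ∨ 0 < k ∧ ∃ h : k < n, π ⟨k, h⟩ < π ⟨k - 1, by omega⟩}

/-- `π` contains the pattern `σ`. -/
def ContainsPat {n m : ℕ} (π : Equiv.Perm (Fin n)) (σ : Equiv.Perm (Fin m)) : Prop :=
  ∃ f : Fin m → Fin n, StrictMono f ∧ ∀ a b : Fin m, σ a < σ b ↔ π (f a) < π (f b)

/-- `π` avoids the pattern `σ`. -/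
def AvoidsPat {n m : ℕ} (π : Equiv.Perm (Fin n)) (σ : Equiv.Perm (Fin m)) : Prop :=
  ¬ ContainsPat π σ

def pat123 : Equiv.Perm (Fin 3) := ⟨![0, 1, 2], ![0, 1, 2], by decide, by decide⟩
def pat132 : Equiv.Perm (Fin 3) := ⟨![0, 2, 1], ![0, 2, 1], by decide, by decide⟩
def pat213 : Equiv.Perm (Fin 3) := ⟨![1, 0, 2], ![1, 0, 2], by decide, by decide⟩
def pat231 : Equiv.Perm (Fin 3) := ⟨![1, 2, 0], ![2, 0, 1], by decide, by decide⟩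
def pat312 : Equiv.Perm (Fin 3) := ⟨![2, 0, 1], ![1, 2, 0], by decide, by decide⟩
def pat321 : Equiv.Perm (Fin 3) := ⟨![2, 1, 0], ![2, 1, 0], by decide, by decide⟩

/-- Direct sum of two permutations. -/
def directSum {m l : ℕ} (π : Equiv.Perm (Fin m)) (σ : Equiv.Perm (Fin l)) :
    Equiv.Perm (Fin (m + l)) :=
  finSumFinEquiv.permCongr (Equiv.sumCongr π σ)

/-- Direct sum of a finite family of permutations. -/
def dsum : {k : ℕ} → (a : Fin k → ℕ) → ((i : Fin k) → Equiv.Perm (Fin (a i))) →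
    Equiv.Perm (Fin (∑ i, a i))
  | 0, _, _ => Equiv.refl _
  | _ + 1, a, τ =>
      (finCongr (Fin.sum_univ_succ a).symm).permCongr
        (directSum (τ 0) (dsum (fun i => a i.succ) (fun i => τ i.succ)))

/-- Set of values of left-to-right maxima. -/
noncomputable def LMAX {n : ℕ} (π : Equiv.Perm (Fin n)) : Finset (Fin n) :=
  Finset.univ.filter fun v => ∃ i, π i = v ∧ ∀ j, j < i → π j < v

/-- Set of values of left-to-right minima. -/
noncomputable def LMIN {n : ℕ} (π : Equiv.Perm (Fin n)) : Finset (Fin n) :=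
  Finset.univ.filter fun v => ∃ i, π i = v ∧ ∀ j, j < i → v < π j

/-- Set of descent bottoms. -/
noncomputable def DESB {n : ℕ} (π : Equiv.Perm (Fin n)) : Finset (Fin n) :=
  Finset.univ.filter fun v => ∃ i : ℕ, ∃ h : i + 1 < n,
    π ⟨i + 1, h⟩ = v ∧ π ⟨i + 1, h⟩ < π ⟨i, by omega⟩

/-- A permutation of `[n]` is indecomposable iff there is no `1 ≤ i < n` with
`π(j) ≤ i` for all `j ≤ i` (1-based; 0-based below). -/
def IndecompN {n : ℕ} (π : Equiv.Perm (Fin n)) : Prop :=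
  ¬ ∃ i : ℕ, 1 ≤ i ∧ i < n ∧ ∀ j : Fin n, (j : ℕ) < i → (π j : ℕ) < i

lemma fin3cases (a : Fin 3) : a = 0 ∨ a = 1 ∨ a = 2 := by revert a; decide

lemma key {n : ℕ} (π : Equiv.Perm (Fin n)) (h1 : AvoidsPat π pat312)
    (h2 : AvoidsPat π pat321) {i j k : Fin n} (hij : i < j) (hjk : j < k)
    (hd : π j < π i) : π i < π k := by
  by_contra hc
  push_neg at hc
  have hki : π k ≠ π i := fun h => by
    have := π.injective h; subst this; exact absurd (hij.trans hjk) (lt_irrefl _)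
  have hkj : π k ≠ π j := fun h => by
    have := π.injective h; subst this; exact absurd hjk (lt_irrefl _)
  have hmono : StrictMono ![i, j, k] := by
    intro a b hab
    rcases fin3cases a with rfl|rfl|rfl <;> rcases fin3cases b with rfl|rfl|rfl <;>
      first
      | exact absurd hab (by decide)
      | exact hij | exact hjk | exact lt_trans hij hjk
  rcases lt_or_gt_of_ne hkj with h | h
  · have h31 : π k < π i := h.trans hd
    refine h2 ⟨![i, j, k], hmono, fun a b => ?_⟩
    rcases fin3cases a with rfl|rfl|rfl <;> rcases fin3cases b with rfl|rfl|rfl <;>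
      first
      | exact iff_of_false (by decide) (lt_irrefl _)
      | exact iff_of_false (by decide) (lt_asymm hd)
      | exact iff_of_false (by decide) (lt_asymm h)
      | exact iff_of_false (by decide) (lt_asymm h31)
      | exact iff_of_true (by decide) hd
      | exact iff_of_true (by decide) h
      | exact iff_of_true (by decide) h31
  · have hki' : π k < π i := lt_of_le_of_ne hc hki
    refine h1 ⟨![i, j, k], hmono, fun a b => ?_⟩
    rcases fin3cases a with rfl|rfl|rfl <;> rcases fin3cases b with rfl|rfl|rfl <;>
      first
      | exact iff_of_false (by decide) (lt_irrefl _)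
      | exact iff_of_false (by decide) (lt_asymm hd)
      | exact iff_of_false (by decide) (lt_asymm h)
      | exact iff_of_false (by decide) (lt_asymm hki')
      | exact iff_of_true (by decide) hd
      | exact iff_of_true (by decide) h
      | exact iff_of_true (by decide) hki'

/-- every indecomposable (312,321)-avoiding permutation of `[n]`, `n ≥ 2`,
equals `2 3 4 ⋯ n 1`, i.e. `finRotate n`. -/
theorem indecomp_avoid_312_321 (n : ℕ) (hn : 2 ≤ n) (π : Equiv.Perm (Fin n))
    (h1 : AvoidsPat π pat312) (h2 : AvoidsPat π pat321) (hind : IndecompN π) :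
    π = finRotate n := by
  -- step: π ⟨i⟩ = i+1 for i < n-1
  have step : ∀ i : ℕ, i < n - 1 → ∀ hi : i < n, (π ⟨i, hi⟩ : ℕ) = i + 1 := by
    intro i
    induction i using Nat.strong_induction_on with
    | _ i IH =>
      intro hi1 hi
      -- previous values
      have prev : ∀ j : ℕ, j < i → ∀ hj : j < n, (π ⟨j, hj⟩ : ℕ) = j + 1 := by
        intro j hj hjn
        exact IH j hj (by omega) hjn
      -- π ⟨i⟩ ∉ {1,...,i}
      have hnotsmall : ∀ j : ℕ, j < i → (π ⟨i, hi⟩ : ℕ) ≠ j + 1 := by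
        intro j hj he
        have hjn : j < n := by omega
        have : π ⟨j, hjn⟩ = π ⟨i, hi⟩ := by
          apply Fin.ext
          rw [prev j hj hjn, he]
        have := π.injective this
        have := Fin.mk.injEq .. ▸ this
        omega
      -- π ⟨i⟩ ≠ 0 (else decomposable)
      have hne0 : (π ⟨i, hi⟩ : ℕ) ≠ 0 := by
        intro h0
        apply hind
        refine ⟨i + 1, by omega, by omega, ?_⟩
        intro j hj
        rcases Nat.lt_or_ge (j : ℕ) i with h | h
        · have : (⟨(j : ℕ), j.isLt⟩ : Fin n) = j := rfl
          have := prev j h j.isLt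
          simp only [this] at *
          omega
        · have hji : (j : ℕ) = i := by omega
          have : j = ⟨i, hi⟩ := Fin.ext hji
          rw [this, h0]
          omega
      -- so π ⟨i⟩ ≥ i+1
      have hge : i + 1 ≤ (π ⟨i, hi⟩ : ℕ) := by
        by_contra hlt
        push_neg at hlt
        have : (π ⟨i, hi⟩ : ℕ) ≠ 0 := hne0
        have hj : (π ⟨i, hi⟩ : ℕ) - 1 < i := by omega
        exact hnotsmall _ hj (by omega)
      by_contra hne
      have hgt : i + 2 ≤ (π ⟨i, hi⟩ : ℕ) := by omega
      -- k := π⁻¹ ⟨i+1⟩, m := π⁻¹ 0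
      set k : Fin n := π.symm ⟨i + 1, by omega⟩ with hk
      set m : Fin n := π.symm ⟨0, by omega⟩ with hm
      have hπk : (π k : ℕ) = i + 1 := by rw [hk, Equiv.apply_symm_apply]
      have hπm : (π m : ℕ) = 0 := by rw [hm, Equiv.apply_symm_apply]
      have hki : i < (k : ℕ) := by
        rcases Nat.lt_or_ge (k : ℕ) i with h | h
        · have := prev k h (by omega)
          have : (π ⟨(k:ℕ), k.isLt⟩ : ℕ) = (k:ℕ) + 1 := prev k h k.isLt
          have hkk : (⟨(k:ℕ), k.isLt⟩ : Fin n) = k := rfl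
          rw [hkk] at this
          omega
        · rcases Nat.eq_or_lt_of_le h with h' | h'
          · exfalso
            have : π ⟨i, hi⟩ = π k := by rw [show (⟨i, hi⟩ : Fin n) = k from Fin.ext h']
            omega
          · exact h'
      have hmi : i < (m : ℕ) := by
        rcases Nat.lt_or_ge (m : ℕ) i with h | h
        · have : (π ⟨(m:ℕ), m.isLt⟩ : ℕ) = (m:ℕ) + 1 := prev m h m.isLt
          have hkk : (⟨(m:ℕ), m.isLt⟩ : Fin n) = m := rfl
          rw [hkk] at this
          omega
        · rcases Nat.eq_or_lt_of_le h with h' | h'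
          · exfalso
            have : π ⟨i, hi⟩ = π m := by rw [show (⟨i, hi⟩ : Fin n) = m from Fin.ext h']
            omega
          · exact h'
      have hmk : m ≠ k := by
        intro h
        rw [h] at hπm
        omega
      rcases lt_or_gt_of_ne hmk with h | h
      · -- i < m < k : π m = 0 < π i, so key gives π i < π k = i+1, contra
        have := key π h1 h2 (show (⟨i, hi⟩ : Fin n) < m from hmi) h
          (show π m < π ⟨i, hi⟩ by rw [Fin.lt_def]; omega)
        rw [Fin.lt_def] at this
        omega
      · have := key π h1 h2 (show (⟨i, hi⟩ : Fin n) < k from hki) h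
          (show π k < π ⟨i, hi⟩ by rw [Fin.lt_def]; omega)
        rw [Fin.lt_def] at this
        omega
  -- last position: π ⟨n-1⟩ = 0
  have hlast : ∀ h : n - 1 < n, (π ⟨n - 1, h⟩ : ℕ) = 0 := by
    intro h
    by_contra h0
    have hv : (π ⟨n - 1, h⟩ : ℕ) ≠ 0 := h0
    set v := (π ⟨n - 1, h⟩ : ℕ) with hvdef
    have hvlt : v < n := (π ⟨n - 1, h⟩).isLt
    have hj : v - 1 < n - 1 := by
      rcases Nat.lt_or_ge (v - 1) (n - 1) with hlt | hge
      · exact hlt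
      · exfalso
        -- v - 1 ≥ n - 1 so v = n - ... v ≤ n - 1 so v - 1 = n-1 impossible unless v = n
        omega
    have := step (v - 1) hj (by omega)
    have heq : π ⟨v - 1, by omega⟩ = π ⟨n - 1, h⟩ := by
      apply Fin.ext
      rw [this]
      omega
    have := π.injective heq
    have := Fin.mk.injEq .. ▸ this
    omega
  -- combine
  obtain ⟨m, rfl⟩ : ∃ m, n = m + 1 := ⟨n - 1, by omega⟩
  ext x
  rw [finRotate_succ_apply, Fin.val_add_one]
  rcases Nat.lt_or_ge (x : ℕ) m with h | h
  · have := step x (by omega) x.isLt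
    have hx : (⟨(x:ℕ), x.isLt⟩ : Fin (m+1)) = x := rfl
    rw [hx] at this
    rw [this]
    have : x ≠ Fin.last m := by
      intro he; rw [he] at h; simp [Fin.last] at h
    simp [this]
  · have hx : x = Fin.last m := by
      apply Fin.ext; simp [Fin.last]; omega
    have hxm : (x : ℕ) = m := by rw [hx]; rfl
    have := hlast (by omega)
    have hxx : (⟨m + 1 - 1, by omega⟩ : Fin (m+1)) = x := by
      apply Fin.ext; simp [hxm]
    rw [hxx] at this
    rw [this]
    simp [hx]
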